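/- arXiv:2212.14586 — 2 statements merged into one kernel-verified Lean document; each statement's English description precedes it below -/
import Mathlib

section
/- In the Smith–Volterra–Cantor construction with ∑ r_k < ∞, each constituent closed interval I_{n,k} of K_n (of length ℓ_n = 2^{-n}∏_{j<n}(1-r_j)) satisfies Leb(I_{n,k} ∩ (ℝ \ K)) = ℓ_n·(1 - ∏_{j≥n}(1 - r_j)). -/
open MeasureTheory Filter

noncomputable def svcLen (r : ℕ → ℝ) : ℕ → ℝ
  | 0 => 1
  | n + 1 => (1 - r n) / 2 * svcLen r n

noncomputable def svcLeft (r : ℕ → ℝ) : ℕ → ℕ → ℝ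
  | 0, _ => 0
  | n + 1, k =>
      if k % 2 = 0 then svcLeft r n (k / 2)
      else svcLeft r n (k / 2) + svcLen r n - svcLen r (n + 1)

/-- The `n`-th stage of the Smith–Volterra–Cantor construction. -/
noncomputable def svcStage (r : ℕ → ℝ) (n : ℕ) : Set ℝ :=
  ⋃ k ∈ Finset.range (2 ^ n), Set.Icc (svcLeft r n k) (svcLeft r n k + svcLen r n)

/-- The Smith–Volterra–Cantor set associated with `r`. -/
noncomputable def svcSet (r : ℕ → ℝ) : Set ℝ := ⋂ n, svcStage r n

section Aux
variable (r : ℕ → ℝ) (hr : ∀ n, r n ∈ Set.Ioo (0 : ℝ) 1)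

def svcI (n k : ℕ) : Set ℝ := Set.Icc (svcLeft r n k) (svcLeft r n k + svcLen r n)

include hr

lemma svcLen_pos : ∀ n, 0 < svcLen r n := by
  intro n
  induction n with
  | zero => norm_num [svcLen]
  | succ n ih =>
    have h := (hr n).2
    rw [svcLen]
    nlinarith

lemma two_svcLen_lt (n : ℕ) : 2 * svcLen r (n + 1) < svcLen r n := by
  have h1 := (hr n).1
  have h2 := svcLen_pos r hr n
  rw [svcLen]
  nlinarith

lemma svcLen_succ_lt (n : ℕ) : svcLen r (n + 1) < svcLen r n := by
  have := two_svcLen_lt r hr n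
  have := svcLen_pos r hr (n + 1)
  linarith

lemma svcLeft_sep : ∀ n k, k + 1 < 2 ^ n →
    svcLeft r n k + svcLen r n < svcLeft r n (k + 1) := by
  intro n
  induction n with
  | zero => intro k hk; simp at hk
  | succ n ih =>
    intro k hk
    rcases Nat.even_or_odd k with ⟨j, hj⟩ | ⟨j, hj⟩
    · subst hj
      have h0 : (j + j) % 2 = 0 := by omega
      have h2 : (j + j) / 2 = j := by omega
      have h3 : (j + j + 1) / 2 = j := by omega
      rw [svcLeft, svcLeft, if_pos h0, if_neg (by omega), h2, h3]
      have := two_svcLen_lt r hr n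
      linarith
    · subst hj
      have h2 : (2 * j + 1) / 2 = j := by omega
      have h3 : (2 * j + 1 + 1) / 2 = j + 1 := by omega
      rw [svcLeft, svcLeft, if_neg (by omega), if_pos (by omega), h2, h3]
      have hIH : svcLeft r n j + svcLen r n < svcLeft r n (j + 1) := by
        apply ih; have : 2 ^ (n + 1) = 2 * 2 ^ n := by ring
        omega
      linarith

lemma svcLeft_sep' (n : ℕ) : ∀ j k, j < k → k < 2 ^ n →
    svcLeft r n j + svcLen r n < svcLeft r n k := by
  intro j k
  induction k with
  | zero => omega
  | succ k ih =>
    intro hjk hk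
    rcases Nat.lt_succ_iff_lt_or_eq.mp hjk with h | h
    · have h1 := ih h (by omega)
      have h2 := svcLeft_sep r hr n k hk
      have h3 := svcLen_pos r hr n
      linarith
    · subst h; exact svcLeft_sep r hr n j hk

lemma svcI_disjoint (n : ℕ) {j k : ℕ} (hjk : j ≠ k) (hj : j < 2 ^ n) (hk : k < 2 ^ n) :
    Disjoint (svcI r n j) (svcI r n k) := by
  wlog h : j < k generalizing j k
  · exact (this hjk.symm hk hj (by omega)).symm
  · rw [Set.disjoint_left]
    rintro x ⟨_, hx2⟩ ⟨hx3, _⟩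
    have := svcLeft_sep' r hr n j k h hk
    linarith

lemma svcI_child_subset (n k : ℕ) : svcI r (n + 1) k ⊆ svcI r n (k / 2) := by
  have hlt := svcLen_succ_lt r hr n
  have hpos := svcLen_pos r hr (n + 1)
  rcases Nat.even_or_odd k with ⟨j, hj⟩ | ⟨j, hj⟩
  · subst hj
    simp only [svcI, svcLeft, if_pos (show (j + j) % 2 = 0 by omega)]
    apply Set.Icc_subset_Icc le_rfl
    linarith
  · subst hj
    simp only [svcI, svcLeft, if_neg (show ¬ (2 * j + 1) % 2 = 0 by omega)]
    apply Set.Icc_subset_Icc <;> linarith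

omit hr in
lemma svcStage_eq (n : ℕ) : svcStage r n = ⋃ k ∈ Finset.range (2 ^ n), svcI r n k := rfl

lemma svcStage_antitone : Antitone (svcStage r) := by
  apply antitone_nat_of_succ_le
  intro n x hx
  rw [svcStage_eq] at hx ⊢
  simp only [Set.mem_iUnion, Finset.mem_range, exists_prop] at hx ⊢
  obtain ⟨k, hk, hx⟩ := hx
  exact ⟨k / 2, by omega, svcI_child_subset r hr n k hx⟩

omit hr in
lemma svcI_subset_stage {n k : ℕ} (hk : k < 2 ^ n) : svcI r n k ⊆ svcStage r n := by
  rw [svcStage_eq]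
  exact Set.subset_biUnion_of_mem (Finset.mem_range.mpr hk)

lemma stage_succ_inter {n k : ℕ} (hk : k < 2 ^ n) :
    svcStage r (n + 1) ∩ svcI r n k = svcI r (n + 1) (2 * k) ∪ svcI r (n + 1) (2 * k + 1) := by
  apply Set.Subset.antisymm
  · rintro x ⟨hx1, hx2⟩
    rw [svcStage_eq] at hx1
    simp only [Set.mem_iUnion, Finset.mem_range, exists_prop] at hx1
    obtain ⟨k', hk', hx'⟩ := hx1
    have hdiv : k' / 2 = k := by
      by_contra hne
      have := svcI_disjoint r hr n hne (by omega) hk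
      exact Set.disjoint_left.mp this (svcI_child_subset r hr n k' hx') hx2
    have : k' = 2 * k ∨ k' = 2 * k + 1 := by omega
    rcases this with h | h <;> subst h
    · exact Or.inl hx'
    · exact Or.inr hx'
  · intro x hx
    have h2 : 2 ^ (n + 1) = 2 * 2 ^ n := by ring
    rcases hx with hx | hx
    · refine ⟨svcI_subset_stage r (n := n + 1) (by omega) hx, ?_⟩
      have := svcI_child_subset r hr n (2 * k) hx
      rwa [show (2 * k) / 2 = k by omega] at this
    · refine ⟨svcI_subset_stage r (n := n + 1) (by omega) hx, ?_⟩
      have := svcI_child_subset r hr n (2 * k + 1) hx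
      rwa [show (2 * k + 1) / 2 = k by omega] at this

end Aux

section Aux2
variable (r : ℕ → ℝ) (hr : ∀ n, r n ∈ Set.Ioo (0 : ℝ) 1)
include hr

lemma stage_inter (n : ℕ) {k : ℕ} (hk : k < 2 ^ n) : ∀ m,
    svcStage r (n + m) ∩ svcI r n k
      = ⋃ k' ∈ Finset.Ico (k * 2 ^ m) ((k + 1) * 2 ^ m), svcI r (n + m) k' := by
  intro m
  induction m with
  | zero =>
    simp only [pow_zero, mul_one, Nat.add_zero]
    rw [show Finset.Ico k (k + 1) = {k} by rw [Nat.Ico_succ_singleton]]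
    simp only [Finset.mem_singleton, Set.iUnion_iUnion_eq_left]
    exact Set.inter_eq_self_of_subset_right (svcI_subset_stage r hk)
  | succ m ih =>
    have hsub : svcStage r (n + (m + 1)) ⊆ svcStage r (n + m) :=
      svcStage_antitone r hr (by omega)
    have step : svcStage r (n + (m + 1)) ∩ svcI r n k
        = svcStage r (n + (m + 1)) ∩ (svcStage r (n + m) ∩ svcI r n k) := by
      rw [← Set.inter_assoc, Set.inter_eq_self_of_subset_left hsub]
    rw [step, ih, Set.inter_iUnion₂]
    have hbound : (k + 1) * 2 ^ m ≤ 2 ^ (n + m) := by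
      calc (k + 1) * 2 ^ m ≤ 2 ^ n * 2 ^ m := Nat.mul_le_mul_right _ (by omega)
        _ = 2 ^ (n + m) := (pow_add 2 n m).symm
    have key : ∀ k' ∈ Finset.Ico (k * 2 ^ m) ((k + 1) * 2 ^ m),
        svcStage r (n + (m + 1)) ∩ svcI r (n + m) k'
          = svcI r (n + m + 1) (2 * k') ∪ svcI r (n + m + 1) (2 * k' + 1) := by
      intro k' hk'
      rw [Finset.mem_Ico] at hk'
      exact stage_succ_inter r hr (n := n + m) (by omega)
    ext x
    simp only [Set.mem_iUnion, Finset.mem_Ico, exists_prop]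
    constructor
    · rintro ⟨k', hk', hx⟩
      rw [key k' (Finset.mem_Ico.mpr hk')] at hx
      have e1 : k * 2 ^ (m + 1) = 2 * (k * 2 ^ m) := by ring
      have e2 : (k + 1) * 2 ^ (m + 1) = 2 * ((k + 1) * 2 ^ m) := by ring
      rcases hx with hx | hx
      · exact ⟨2 * k', by omega, hx⟩
      · exact ⟨2 * k' + 1, by omega, hx⟩
    · rintro ⟨k'', hk'', hx⟩
      have e1 : k * 2 ^ (m + 1) = 2 * (k * 2 ^ m) := by ring
      have e2 : (k + 1) * 2 ^ (m + 1) = 2 * ((k + 1) * 2 ^ m) := by ring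
      refine ⟨k'' / 2, by omega, ?_⟩
      rw [key (k'' / 2) (Finset.mem_Ico.mpr (by omega))]
      rcases Nat.even_or_odd k'' with ⟨j, hj⟩ | ⟨j, hj⟩
      · left; rw [show 2 * (k'' / 2) = k'' by omega]; exact hx
      · right; rw [show 2 * (k'' / 2) + 1 = k'' by omega]; exact hx

lemma svcLen_prod (n : ℕ) : ∀ m, 2 ^ m * svcLen r (n + m)
    = svcLen r n * ∏ j ∈ Finset.range m, (1 - r (n + j)) := by
  intro m
  induction m with
  | zero => simp
  | succ m ih =>
    rw [Finset.prod_range_succ, show n + (m + 1) = (n + m) + 1 by omega, svcLen]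
    linear_combination (1 - r (n + m)) * ih

lemma volume_stage_inter (n : ℕ) {k : ℕ} (hk : k < 2 ^ n) (m : ℕ) :
    volume (svcStage r (n + m) ∩ svcI r n k)
      = ENNReal.ofReal (svcLen r n * ∏ j ∈ Finset.range m, (1 - r (n + j))) := by
  rw [stage_inter r hr n hk m]
  have hbound : (k + 1) * 2 ^ m ≤ 2 ^ (n + m) := by
    calc (k + 1) * 2 ^ m ≤ 2 ^ n * 2 ^ m := Nat.mul_le_mul_right _ (by omega)
      _ = 2 ^ (n + m) := (pow_add 2 n m).symm
  rw [measure_biUnion_finset]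
  · have hvol : ∀ k', volume (svcI r (n + m) k') = ENNReal.ofReal (svcLen r (n + m)) := by
      intro k'
      simp [svcI, Real.volume_Icc]
    simp only [hvol, Finset.sum_const, Nat.card_Ico]
    rw [show (k + 1) * 2 ^ m - k * 2 ^ m = 2 ^ m by
      rw [Nat.add_mul, one_mul, Nat.add_sub_cancel_left]]
    rw [nsmul_eq_mul, ← svcLen_prod r hr n m, ENNReal.ofReal_mul (by positivity)]
    congr 1
    rw [ENNReal.ofReal_pow (by norm_num)]
    norm_num
  · intro j hj j' hj' hne
    rw [Finset.mem_coe, Finset.mem_Ico] at hj hj'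
    exact (svcI_disjoint r hr (n + m) hne (by omega) (by omega)).mono le_rfl le_rfl
  · intro b _
    exact measurableSet_Icc

end Aux2

section Aux3
variable (r : ℕ → ℝ) (hr : ∀ n, r n ∈ Set.Ioo (0 : ℝ) 1)

omit hr in
lemma svcStage_measurable (j : ℕ) : MeasurableSet (svcStage r j) :=
  (Finset.range (2 ^ j)).measurableSet_biUnion fun _ _ => measurableSet_Icc

omit hr in
lemma svcSet_measurable : MeasurableSet (svcSet r) :=
  MeasurableSet.iInter fun j => svcStage_measurable r j

include hr

lemma iInter_stage_tail (n : ℕ) : ⋂ m, svcStage r (n + m) = svcSet r := by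
  apply Set.Subset.antisymm
  · intro x hx
    simp only [Set.mem_iInter] at hx
    simp only [svcSet, Set.mem_iInter]
    intro j
    rcases le_or_gt n j with h | h
    · have := hx (j - n); rwa [Nat.add_sub_cancel' h] at this
    · have h0 := hx 0
      rw [Nat.add_zero] at h0
      exact svcStage_antitone r hr (le_of_lt h) h0
  · intro x hx
    simp only [svcSet, Set.mem_iInter] at hx
    simp only [Set.mem_iInter]
    intro m; exact hx (n + m)

end Aux3


/-- Each constituent closed interval `I_{n,k}` of the stage `K_n` (for `k < 2^n`), of length
`ℓ_n = svcLen r n`, satisfies `Leb(I_{n,k} ∩ (ℝ \ K)) = ℓ_n · (1 - ∏_{j ≥ n} (1 - r j))`,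
where `Q` denotes the convergent tail product `∏_{j ≥ n} (1 - r j)`. -/
theorem interval_complement_measure (r : ℕ → ℝ) (hr : ∀ n, r n ∈ Set.Ioo (0 : ℝ) 1)
    (hsum : Summable r) (n k : ℕ) (hk : k < 2 ^ n) (Q : ℝ)
    (hQ : Tendsto (fun N => ∏ j ∈ Finset.range N, (1 - r (n + j))) atTop (nhds Q)) :
    volume (Set.Icc (svcLeft r n k) (svcLeft r n k + svcLen r n) ∩ (svcSet r)ᶜ)
      = ENNReal.ofReal (svcLen r n * (1 - Q)) := by

  have hlpos := svcLen_pos r hr n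
  have hQ0 : 0 ≤ Q := ge_of_tendsto' hQ fun N =>
    Finset.prod_nonneg fun j _ => by linarith [(hr (n + j)).2]
  have hImeas : MeasurableSet (svcI r n k) := measurableSet_Icc
  have hIvol : volume (svcI r n k) = ENNReal.ofReal (svcLen r n) := by
    simp [svcI, Real.volume_Icc]
  have hKI : volume (svcSet r ∩ svcI r n k) = ENNReal.ofReal (svcLen r n * Q) := by
    have heq : svcSet r ∩ svcI r n k = ⋂ m, (svcStage r (n + m) ∩ svcI r n k) := by
      rw [← iInter_stage_tail r hr n, Set.iInter_inter]
    rw [heq]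
    have htend := tendsto_measure_iInter_atTop (μ := volume)
      (s := fun m => svcStage r (n + m) ∩ svcI r n k)
      (fun m => ((svcStage_measurable r (n + m)).inter hImeas).nullMeasurableSet)
      (fun a b hab => Set.inter_subset_inter_left _
        (svcStage_antitone r hr (by omega)))
      ⟨0, by
        refine ne_top_of_le_ne_top ?_ (measure_mono Set.inter_subset_right)
        rw [hIvol]
        exact ENNReal.ofReal_ne_top⟩
    have h2 : Tendsto (fun m => volume (svcStage r (n + m) ∩ svcI r n k)) atTop
        (nhds (ENNReal.ofReal (svcLen r n * Q))) := by
      have := (ENNReal.continuous_ofReal.tendsto _).comp (hQ.const_mul (svcLen r n))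
      refine this.congr fun m => ?_
      exact (volume_stage_inter r hr n hk m).symm
    exact tendsto_nhds_unique htend h2
  have hsplit : svcI r n k ∩ (svcSet r)ᶜ = svcI r n k \ (svcSet r ∩ svcI r n k) := by
    ext x
    simp only [Set.mem_inter_iff, Set.mem_compl_iff, Set.mem_diff]
    tauto
  have hd : volume (svcI r n k \ (svcSet r ∩ svcI r n k))
      = volume (svcI r n k) - volume (svcSet r ∩ svcI r n k) :=
    measure_diff Set.inter_subset_right
      ((svcSet_measurable r).inter hImeas).nullMeasurableSet
      (by rw [hKI]; exact ENNReal.ofReal_ne_top)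
  show volume (svcI r n k ∩ (svcSet r)ᶜ) = _
  rw [hsplit, hd, hIvol, hKI, ← ENNReal.ofReal_sub _ (mul_nonneg (svcLen_pos r hr n).le hQ0)]
  congr 1
  ring
end

section
/- Let α > 0, c ∈ (0,1), C > 0 and set r_n = c·exp(-C·2^{nα}). Let K be the associated Smith–Volterra–Cantor set and ω = ℝ \ K. Then there exist c', C', L_0 > 0 such that for every 0 < L < L_0: c'·exp(-C'·L^{-α}) ≤ inf_{x∈ℝ} Leb(ω ∩ B(x,L))/Leb(B(x,L)) ≤ C'·exp(-c'·L^{-α}). In particular, ω is α-exponentially thick but not α'-exponentially thick for any α' < α. -/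
open MeasureTheory Filter

/-- `ω ⊆ ℝ` is `α`-exponentially thick: there are `C'', c'', L₀'' > 0` with
`Leb(ω ∩ (x-L, x+L)) ≥ c'' · exp(-C'' · L^{-α}) · 2L` for all `0 < L < L₀''` and `x`. -/
def ExpThick1 (α : ℝ) (ω : Set ℝ) : Prop :=
  ∃ C > (0 : ℝ), ∃ c > (0 : ℝ), ∃ L₀ > (0 : ℝ), ∀ L : ℝ, 0 < L → L < L₀ → ∀ x : ℝ,
    ENNReal.ofReal (c * Real.exp (-C * L ^ (-α))) * volume (Set.Ioo (x - L) (x + L))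
      ≤ volume (ω ∩ Set.Ioo (x - L) (x + L))

def SvcOK (r : ℕ → ℝ) : Prop := (∀ n, 0 < r n) ∧ (∀ n, r n < 1) ∧ (∀ n, r (n+1) ≤ r n)

namespace SvcOK
variable {r : ℕ → ℝ} (h : SvcOK r)
include h

lemma pos (n : ℕ) : 0 < r n := h.1 n
lemma lt_one (n : ℕ) : r n < 1 := h.2.1 n
lemma anti (n : ℕ) : r (n+1) ≤ r n := h.2.2 n

lemma len_pos : ∀ n, 0 < svcLen r n := by
  intro n
  induction n with
  | zero => norm_num [svcLen]
  | succ n ih =>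
    have := h.lt_one n
    have h2 : 0 < (1 - r n) / 2 := by linarith
    simpa [svcLen] using mul_pos h2 ih

omit h in
lemma len_succ (n : ℕ) : svcLen r (n + 1) = (1 - r n) / 2 * svcLen r n := rfl

lemma len_succ_lt_half (n : ℕ) : svcLen r (n + 1) < svcLen r n / 2 := by
  have hp := h.len_pos n
  have := h.pos n
  rw [len_succ]
  nlinarith

lemma len_succ_le (n : ℕ) : svcLen r (n + 1) ≤ svcLen r n := by
  have hp := h.len_pos n
  have := h.len_succ_lt_half n
  linarith

lemma len_anti : ∀ {m n : ℕ}, m ≤ n → svcLen r n ≤ svcLen r m := by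
  intro m n hmn
  induction n, hmn using Nat.le_induction with
  | base => exact le_refl _
  | succ n hmn ih => exact le_trans (h.len_succ_le n) ih

lemma len_le_two_inv_pow : ∀ n, svcLen r n ≤ ((2 : ℝ)⁻¹) ^ n := by
  intro n
  induction n with
  | zero => norm_num [svcLen]
  | succ n ih =>
    have := h.len_succ_lt_half n
    have h2 : svcLen r n / 2 ≤ (2 : ℝ)⁻¹ ^ (n + 1) := by
      rw [pow_succ]
      nlinarith
    linarith

lemma gap_anti (n : ℕ) : r (n+1) * svcLen r (n+1) ≤ r n * svcLen r n := by
  have := h.anti n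
  have h2 := h.len_succ_le n
  have h3 := h.len_pos (n+1)
  have h4 := h.pos (n+1)
  have h5 := h.pos n
  nlinarith

omit h in
lemma left_zero : ∀ n, svcLeft r n 0 = 0 := by
  intro n
  induction n with
  | zero => rfl
  | succ n ih => simp [svcLeft, ih]

end SvcOK

namespace SvcOK
variable {r : ℕ → ℝ} (h : SvcOK r)
include h

omit h in
lemma left_even (n j : ℕ) : svcLeft r (n+1) (2*j) = svcLeft r n j := by
  simp [svcLeft, Nat.mul_mod_right, Nat.mul_div_cancel_left]

omit h in
lemma left_odd (n j : ℕ) :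
    svcLeft r (n+1) (2*j+1) = svcLeft r n j + svcLen r n - svcLen r (n+1) := by
  have h1 : (2*j+1) % 2 = 1 := by omega
  have h2 : (2*j+1) / 2 = j := by omega
  simp [svcLeft, h1, h2]

lemma sep : ∀ n k, k + 1 < 2^(n+1) →
    svcLeft r (n+1) k + svcLen r (n+1) + r n * svcLen r n ≤ svcLeft r (n+1) (k+1) := by
  intro n
  induction n with
  | zero =>
    intro k hk
    have hk0 : k = 0 := by simpa using Nat.lt_one_iff.mp (by omega : k < 1)
    subst hk0
    have e1 : svcLeft r 1 0 = 0 := left_zero (r := r) 1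
    have e2 : svcLeft r 1 1 = svcLeft r 0 0 + svcLen r 0 - svcLen r 1 := by
      simpa using left_odd (r := r) 0 0
    have e3 : svcLen r 0 = 1 := rfl
    have e4 : svcLeft r 0 0 = 0 := rfl
    have e5 : 2 * svcLen r 1 = (1 - r 0) * svcLen r 0 := by rw [len_succ]; ring
    rw [e1, e2, e3, e4]
    nlinarith [h.len_pos 1]
  | succ n ih =>
    intro k hk
    rcases Nat.even_or_odd k with ⟨j, hj⟩ | ⟨j, hj⟩
    · -- k = 2j, k+1 = 2j+1
      subst hj
      rw [show j + j = 2*j by ring, left_even, left_odd]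
      have e5 : 2 * svcLen r (n+2) = (1 - r (n+1)) * svcLen r (n+1) := by
        rw [len_succ]; ring
      nlinarith [h.len_pos (n+2), h.pos (n+1), h.len_pos (n+1)]
    · -- k = 2j+1, k+1 = 2(j+1)
      subst hj
      have hj1 : j + 1 < 2^(n+1) := by
        have := hk
        rw [pow_succ] at this ⊢
        omega
      have ihj := ih j hj1
      rw [left_odd, show 2*j+1+1 = 2*(j+1) by ring, left_even]
      have hg := h.gap_anti n
      have hgl : r (n+1) * svcLen r (n+1) ≤ r n * svcLen r n := hg
      linarith

lemma sep' : ∀ n k1 k2, k1 < k2 → k2 < 2^(n+1) →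
    svcLeft r (n+1) k1 + svcLen r (n+1) + r n * svcLen r n ≤ svcLeft r (n+1) k2 := by
  intro n k1 k2 h12 h2
  induction k2, h12 using Nat.le_induction with
  | base => exact h.sep n k1 h2
  | succ k2 hk12 ih =>
    have hk2 : k2 < 2^(n+1) := by omega
    have i1 := ih hk2
    have i2 := h.sep n k2 h2
    have p1 := h.len_pos (n+1)
    have p2 := mul_pos (h.pos n) (h.len_pos n)
    linarith

lemma left_mono : ∀ n k1 k2, k1 ≤ k2 → k2 < 2^n → svcLeft r n k1 ≤ svcLeft r n k2 := by
  intro n k1 k2 h12 h2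
  rcases eq_or_lt_of_le h12 with rfl | hlt
  · exact le_refl _
  · cases n with
    | zero => omega
    | succ n =>
      have := h.sep' n k1 k2 hlt h2
      have p1 := h.len_pos (n+1)
      have p2 := mul_pos (h.pos n) (h.len_pos n)
      linarith

lemma stage_succ_subset (n : ℕ) : svcStage r (n+1) ⊆ svcStage r n := by
  intro x hx
  simp only [svcStage, Set.mem_iUnion, Finset.mem_range] at hx ⊢
  obtain ⟨k, hk, hx⟩ := hx
  refine ⟨k / 2, ?_, ?_⟩
  · have : k < 2 * 2^n := by rw [pow_succ] at hk; omega
    omega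
  · have hle := h.len_succ_le n
    rcases Nat.even_or_odd k with ⟨j, hj⟩ | ⟨j, hj⟩
    · subst hj
      rw [show j + j = 2*j by ring] at hx ⊢
      rw [left_even] at hx
      have hd : 2*j/2 = j := by omega
      rw [hd]
      exact ⟨hx.1, le_trans hx.2 (by linarith)⟩
    · subst hj
      rw [left_odd] at hx
      have hd : (2*j+1)/2 = j := by omega
      rw [hd]
      constructor
      · linarith [hx.1]
      · linarith [hx.2]

lemma stage_anti : ∀ {m n : ℕ}, m ≤ n → svcStage r n ⊆ svcStage r m := by
  intro m n hmn
  induction n, hmn using Nat.le_induction with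
  | base => exact le_refl _
  | succ n hmn ih => exact le_trans (h.stage_succ_subset n) ih

omit h in
lemma set_subset_stage (n : ℕ) : svcSet r ⊆ svcStage r n := Set.iInter_subset _ n

omit h in
lemma stage_measurable (n : ℕ) : MeasurableSet (svcStage r n) := by
  apply Finset.measurableSet_biUnion
  intro k _
  exact measurableSet_Icc

omit h in
lemma set_measurable : MeasurableSet (svcSet r) :=
  MeasurableSet.iInter fun n => stage_measurable n

lemma vol_stage (n : ℕ) :
    volume (svcStage r n) = ENNReal.ofReal ((2:ℝ)^n * svcLen r n) := by
  have hdisj : (↑(Finset.range (2^n)) : Set ℕ).PairwiseDisjoint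
      (fun k => Set.Icc (svcLeft r n k) (svcLeft r n k + svcLen r n)) := by
    have key : ∀ k1 k2, k1 < k2 → k2 < 2^n → Disjoint
        (Set.Icc (svcLeft r n k1) (svcLeft r n k1 + svcLen r n))
        (Set.Icc (svcLeft r n k2) (svcLeft r n k2 + svcLen r n)) := by
      intro k1 k2 hlt hk2
      cases n with
      | zero => omega
      | succ n =>
        have hs := h.sep' n k1 k2 hlt hk2
        have p2 := mul_pos (h.pos n) (h.len_pos n)
        apply Set.disjoint_left.mpr
        intro x hx1 hx2
        have h1 : x ≤ svcLeft r (n+1) k1 + svcLen r (n+1) := hx1.2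
        have h2 : svcLeft r (n+1) k2 ≤ x := hx2.1
        linarith
    intro k1 hk1 k2 hk2 hne
    simp only [Finset.coe_range, Set.mem_Iio] at hk1 hk2
    rcases lt_or_gt_of_ne hne with hlt | hgt
    · exact key k1 k2 hlt hk2
    · exact (key k2 k1 hgt hk1).symm
  rw [svcStage, measure_biUnion_finset hdisj (fun k _ => measurableSet_Icc)]
  have hvol : ∀ k, volume (Set.Icc (svcLeft r n k) (svcLeft r n k + svcLen r n))
      = ENNReal.ofReal (svcLen r n) := by
    intro k
    rw [Real.volume_Icc]
    congr 1
    ring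
  simp only [hvol, Finset.sum_const, Finset.card_range, nsmul_eq_mul]
  rw [← ENNReal.ofReal_natCast (2^n), ← ENNReal.ofReal_mul (by positivity)]
  congr 1
  push_cast
  ring

lemma two_pow_len_le_one : ∀ n, (2:ℝ)^n * svcLen r n ≤ 1 := by
  intro n
  induction n with
  | zero => norm_num [svcLen]
  | succ n ih =>
    have e5 : 2 * svcLen r (n+1) = (1 - r n) * svcLen r n := by rw [len_succ]; ring
    have hp := h.len_pos n
    have hr0 := h.pos n
    have : (2:ℝ)^(n+1) * svcLen r (n+1) = (2:ℝ)^n * ((1 - r n) * svcLen r n) := by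
      rw [← e5]; ring
    rw [this]
    have h2 : (1 - r n) * svcLen r n ≤ svcLen r n := by nlinarith
    calc (2:ℝ)^n * ((1 - r n) * svcLen r n) ≤ (2:ℝ)^n * svcLen r n := by
          apply mul_le_mul_of_nonneg_left h2 (by positivity)
      _ ≤ 1 := ih

end SvcOK

namespace SvcOK
variable {r : ℕ → ℝ} (h : SvcOK r)
include h

omit h in
lemma len_succ' (n : ℕ) : 2 * svcLen r (n+1) = (1 - r n) * svcLen r n := by
  show 2 * ((1 - r n)/2 * svcLen r n) = _
  ring

lemma vol_stage_sub_succ (n : ℕ) :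
    volume (svcStage r n \ svcStage r (n+1)) ≤ ENNReal.ofReal (r n) := by
  rw [measure_diff (h.stage_succ_subset n) (stage_measurable (n+1)).nullMeasurableSet
      (by rw [h.vol_stage (n+1)]; exact ENNReal.ofReal_ne_top)]
  rw [h.vol_stage n, h.vol_stage (n+1)]
  have hnn : (0:ℝ) ≤ (2:ℝ)^(n+1) * svcLen r (n+1) := by
    have := h.len_pos (n+1); positivity
  rw [← ENNReal.ofReal_sub _ hnn]
  apply ENNReal.ofReal_le_ofReal
  have e : (2:ℝ)^(n+1) * svcLen r (n+1) = (2:ℝ)^n * ((1 - r n) * svcLen r n) := by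
    rw [← len_succ' (r := r) n]; ring
  rw [e]
  have h1 : (2:ℝ)^n * svcLen r n - (2:ℝ)^n * ((1 - r n) * svcLen r n)
      = r n * ((2:ℝ)^n * svcLen r n) := by ring
  rw [h1]
  have h2 := h.two_pow_len_le_one n
  have h3 := h.pos n
  nlinarith [h.len_pos n, pow_pos (by norm_num : (0:ℝ) < 2) n]

lemma stage_diff_subset (m : ℕ) :
    svcStage r m \ svcSet r ⊆ ⋃ i : ℕ, (svcStage r (m+i) \ svcStage r (m+i+1)) := by
  intro x hx
  obtain ⟨hxm, hxK⟩ := hx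
  have hex : ∃ n, x ∉ svcStage r n := by
    by_contra hcon
    push_neg at hcon
    exact hxK (Set.mem_iInter.mpr hcon)
  classical
  let j := Nat.find hex
  have hj : x ∉ svcStage r j := Nat.find_spec hex
  have hmin : ∀ k, k < j → x ∈ svcStage r k := fun k hk => by
    by_contra hcon
    exact Nat.find_min hex hk hcon
  have hmj : m < j := by
    by_contra hle
    push_neg at hle
    exact hj (h.stage_anti hle hxm)
  refine Set.mem_iUnion.mpr ⟨j - m - 1, ?_, ?_⟩
  · have : m + (j - m - 1) = j - 1 := by omega
    rw [this]
    exact hmin (j-1) (by omega)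
  · have : m + (j - m - 1) + 1 = j := by omega
    rw [this]
    exact hj

lemma vol_stage_diff (hsum : Summable r) (m : ℕ) :
    volume (svcStage r m \ svcSet r) ≤ ENNReal.ofReal (∑' i, r (m+i)) := by
  have hsum' : Summable (fun i => r (m+i)) := by
    have : (fun i => r (m+i)) = (fun i => r (i+m)) := by
      funext i; rw [Nat.add_comm]
    rw [this]
    exact (summable_nat_add_iff m).mpr hsum
  calc volume (svcStage r m \ svcSet r)
      ≤ volume (⋃ i : ℕ, (svcStage r (m+i) \ svcStage r (m+i+1))) :=
        measure_mono (h.stage_diff_subset m)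
    _ ≤ ∑' i : ℕ, volume (svcStage r (m+i) \ svcStage r (m+i+1)) := measure_iUnion_le _
    _ ≤ ∑' i : ℕ, ENNReal.ofReal (r (m+i)) :=
        ENNReal.tsum_le_tsum (fun i => h.vol_stage_sub_succ (m+i))
    _ = ENNReal.ofReal (∑' i, r (m+i)) :=
        (ENNReal.ofReal_tsum_of_nonneg (fun i => (h.pos (m+i)).le) hsum').symm

end SvcOK


-- helper: 1 - x ≥ exp(-(x/(1-cc)))
lemma one_sub_ge_exp {x cc : ℝ} (hx0 : 0 < x) (hxc : x ≤ cc) (hcc : cc < 1) :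
    Real.exp (-(x/(1-cc))) ≤ 1 - x := by
  have hpos : 0 < 1 - cc := by linarith
  have hy : 0 < x/(1-cc) := by positivity
  have h1 : 1 + x/(1-cc) ≤ Real.exp (x/(1-cc)) := by
    linarith [Real.add_one_le_exp (x/(1-cc))]
  have h2 : Real.exp (-(x/(1-cc))) ≤ (1 + x/(1-cc))⁻¹ := by
    rw [Real.exp_neg]
    exact inv_anti₀ (by linarith) h1
  have h3 : (1 + x/(1-cc))⁻¹ ≤ 1 - x := by
    rw [inv_le_iff_one_le_mul₀ (by linarith)]
    have heq : (1-x) * (1 + x/(1-cc)) - 1 = x * (cc - x) / (1 - cc) := by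
      field_simp
      ring
    have hnn : 0 ≤ x * (cc - x) / (1 - cc) :=
      div_nonneg (mul_nonneg hx0.le (by linarith)) hpos.le
    linarith
  linarith

-- helper : A^m + i*(A-1) ≤ A^(m+i)
lemma pow_tail_ge {A : ℝ} (hA : 1 < A) (m i : ℕ) :
    A^m + i*(A-1) ≤ A^(m+i) := by
  have h1 : (1:ℝ) ≤ A^m := one_le_pow₀ hA.le
  have h2 : 1 + (i:ℝ)*(A-1) ≤ A^i := by
    have := one_add_mul_le_pow (by linarith : (-2:ℝ) ≤ A - 1) i
    simpa [add_comm] using this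
  have h3 : A^(m+i) = A^m * A^i := pow_add A m i
  have h4 : (0:ℝ) ≤ (i:ℝ)*(A-1) := mul_nonneg (Nat.cast_nonneg i) (by linarith)
  nlinarith


section Main

variable {α c C : ℝ} {r : ℕ → ℝ}

lemma hrA (hr : ∀ n, r n = c * Real.exp (-C * (2 : ℝ) ^ ((n : ℝ) * α))) (n : ℕ) :
    r n = c * Real.exp (-C * ((2:ℝ)^α)^n) := by
  rw [hr n]
  congr 2
  rw [mul_comm ((n:ℝ)) α, Real.rpow_mul (by norm_num : (0:ℝ) ≤ 2), Real.rpow_natCast]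

lemma svcok (hα : 0 < α) (hc0 : 0 < c) (hc1 : c < 1) (hC : 0 < C)
    (hr : ∀ n, r n = c * Real.exp (-C * (2 : ℝ) ^ ((n : ℝ) * α))) : SvcOK r := by
  have hA1 : (1:ℝ) < (2:ℝ)^α := Real.one_lt_rpow_iff_of_pos (by norm_num) |>.mpr (Or.inl ⟨by norm_num, hα⟩)
  have hA0 : (0:ℝ) < (2:ℝ)^α := by linarith
  refine ⟨fun n => ?_, fun n => ?_, fun n => ?_⟩
  · rw [hrA hr n]
    positivity
  · rw [hrA hr n]
    have h1 : Real.exp (-C * ((2:ℝ)^α)^n) ≤ 1 := by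
      apply Real.exp_le_one_iff.mpr
      have : (0:ℝ) < ((2:ℝ)^α)^n := pow_pos hA0 n
      nlinarith
    nlinarith [Real.exp_pos (-C * ((2:ℝ)^α)^n)]
  · rw [hrA hr n, hrA hr (n+1)]
    have h2 : ((2:ℝ)^α)^n ≤ ((2:ℝ)^α)^(n+1) :=
      pow_le_pow_right₀ hA1.le (by omega)
    have := Real.exp_le_exp.mpr (by nlinarith : -C * ((2:ℝ)^α)^(n+1) ≤ -C * ((2:ℝ)^α)^n)
    nlinarith

lemma summable_r (hα : 0 < α) (hc0 : 0 < c) (hC : 0 < C)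
    (hr : ∀ n, r n = c * Real.exp (-C * (2 : ℝ) ^ ((n : ℝ) * α))) : Summable r := by
  have hA1 : (1:ℝ) < (2:ℝ)^α := Real.one_lt_rpow_iff_of_pos (by norm_num) |>.mpr (Or.inl ⟨by norm_num, hα⟩)
  set A := (2:ℝ)^α with hA
  set q := Real.exp (-C * (A - 1)) with hq
  have hq0 : 0 < q := Real.exp_pos _
  have hq1 : q < 1 := Real.exp_lt_one_iff.mpr (by nlinarith)
  apply Summable.of_nonneg_of_le (f := fun n => (c * Real.exp (-C)) * q ^ n)
  · intro n
    rw [hrA hr n]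
    positivity
  · intro n
    rw [hrA hr n]
    have hqe : q ^ n = Real.exp (-C * (A-1) * n) := by
      rw [hq, ← Real.exp_nat_mul]
      ring_nf
    rw [hqe, mul_assoc, ← Real.exp_add]
    apply mul_le_mul_of_nonneg_left _ hc0.le
    apply Real.exp_le_exp.mpr
    have := pow_tail_ge hA1 0 n
    simp only [pow_zero, zero_add] at this
    nlinarith
  · exact Summable.mul_left _ (summable_geometric_of_lt_one hq0.le hq1)

lemma tail_bound (hα : 0 < α) (hc0 : 0 < c) (hC : 0 < C)
    (hr : ∀ n, r n = c * Real.exp (-C * (2 : ℝ) ^ ((n : ℝ) * α))) (m : ℕ) :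
    ∑' i, r (m+i) ≤ (c * (1 - Real.exp (-C * ((2:ℝ)^α - 1)))⁻¹) *
      Real.exp (-C * ((2:ℝ)^α)^m) := by
  have hA1 : (1:ℝ) < (2:ℝ)^α := Real.one_lt_rpow_iff_of_pos (by norm_num) |>.mpr (Or.inl ⟨by norm_num, hα⟩)
  set A := (2:ℝ)^α with hA
  set q := Real.exp (-C * (A - 1)) with hq
  have hq0 : 0 < q := Real.exp_pos _
  have hq1 : q < 1 := Real.exp_lt_one_iff.mpr (by nlinarith)
  have hle : ∀ i : ℕ, r (m+i) ≤ (c * Real.exp (-C * A^m)) * q ^ i := by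
    intro i
    rw [hrA hr (m+i)]
    have hqe : q ^ i = Real.exp (-C * (A-1) * i) := by
      rw [hq, ← Real.exp_nat_mul]; ring_nf
    rw [hqe, mul_assoc, ← Real.exp_add]
    apply mul_le_mul_of_nonneg_left _ hc0.le
    apply Real.exp_le_exp.mpr
    have := pow_tail_ge hA1 m i
    nlinarith
  have hsum2 : Summable (fun i => (c * Real.exp (-C * A^m)) * q ^ i) :=
    Summable.mul_left _ (summable_geometric_of_lt_one hq0.le hq1)
  have hsum1 : Summable (fun i => r (m+i)) := by
    apply Summable.of_nonneg_of_le _ hle hsum2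
    intro i
    rw [hrA hr (m+i)]
    positivity
  calc ∑' i, r (m+i) ≤ ∑' i, (c * Real.exp (-C * A^m)) * q ^ i :=
        Summable.tsum_le_tsum hle hsum1 hsum2
    _ = (c * Real.exp (-C * A^m)) * (1-q)⁻¹ := by
        rw [tsum_mul_left, tsum_geometric_of_lt_one hq0.le hq1]
    _ = (c * (1-q)⁻¹) * Real.exp (-C * A^m) := by ring

lemma len_lower (hα : 0 < α) (hc0 : 0 < c) (hc1 : c < 1) (hC : 0 < C)
    (hr : ∀ n, r n = c * Real.exp (-C * (2 : ℝ) ^ ((n : ℝ) * α))) (n : ℕ) :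
    Real.exp (-(∑' i, r i)/(1-c)) ≤ (2:ℝ)^n * svcLen r n := by
  have hok := svcok hα hc0 hc1 hC hr
  have hsum := summable_r hα hc0 hC hr
  have hS : ∀ k, ∑ j ∈ Finset.range k, r j ≤ ∑' i, r i := fun k =>
    Summable.sum_le_tsum _ (fun i _ => (hok.pos i).le) hsum
  have main : ∀ n, Real.exp (-(∑ j ∈ Finset.range n, r j)/(1-c)) ≤ (2:ℝ)^n * svcLen r n := by
    intro n
    induction n with
    | zero => simp [svcLen]
    | succ n ih =>
      have e : (2:ℝ)^(n+1) * svcLen r (n+1) = (1 - r n) * ((2:ℝ)^n * svcLen r n) := by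
        simp only [svcLen]; ring
      rw [e, Finset.sum_range_succ]
      have hle : r n ≤ c := by
        rw [hrA hr n]
        have h1 : Real.exp (-C * ((2:ℝ)^α)^n) ≤ 1 := by
          apply Real.exp_le_one_iff.mpr
          have hA1 : (1:ℝ) < (2:ℝ)^α :=
            Real.one_lt_rpow_iff_of_pos (by norm_num) |>.mpr (Or.inl ⟨by norm_num, hα⟩)
          have : (0:ℝ) < ((2:ℝ)^α)^n := pow_pos (by linarith) n
          nlinarith
        nlinarith [Real.exp_pos (-C * ((2:ℝ)^α)^n)]
      have h1 : Real.exp (-(r n)/(1-c)) ≤ 1 - r n := by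
        have h2 := one_sub_ge_exp (hok.pos n) hle hc1
        have h3 : -(r n)/(1-c) = -((r n)/(1-c)) := by ring
        rw [h3]
        exact h2
      have h2 : Real.exp (-(∑ j ∈ Finset.range n, r j + r n)/(1-c))
          = Real.exp (-(r n)/(1-c)) * Real.exp (-(∑ j ∈ Finset.range n, r j)/(1-c)) := by
        rw [← Real.exp_add]
        congr 1
        field_simp
        try ring
      rw [h2]
      have hrn1 : 0 < 1 - r n := by linarith [hok.lt_one n]
      have he1 : 0 < Real.exp (-(∑ j ∈ Finset.range n, r j)/(1-c)) := Real.exp_pos _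
      have he2 : 0 < Real.exp (-(r n)/(1-c)) := Real.exp_pos _
      nlinarith
  calc Real.exp (-(∑' i, r i)/(1-c)) ≤ Real.exp (-(∑ j ∈ Finset.range n, r j)/(1-c)) := by
        apply Real.exp_le_exp.mpr
        have h1c : 0 < 1 - c := by linarith
        exact (div_le_div_iff_of_pos_right h1c).mpr (by linarith [hS n])
    _ ≤ (2:ℝ)^n * svcLen r n := main n

end Main

section Key
variable {α c C : ℝ} {r : ℕ → ℝ}

lemma key1 (hα : 0 < α) (hc0 : 0 < c) (hc1 : c < 1) (hC : 0 < C)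
    (hr : ∀ n, r n = c * Real.exp (-C * (2 : ℝ) ^ ((n : ℝ) * α))) :
    ∀ L : ℝ, 0 < L → L < 1 → ∀ x : ℝ,
    ENNReal.ofReal ((c/4) * Real.exp (-(C * (2:ℝ)^α) * L ^ (-α)) * (2*L))
      ≤ volume ((svcSet r)ᶜ ∩ Set.Ioo (x - L) (x + L)) := by
  intro L hL hL1 x
  have hok := svcok hα hc0 hc1 hC hr
  have hA1 : (1:ℝ) < (2:ℝ)^α :=
    Real.one_lt_rpow_iff_of_pos (by norm_num) |>.mpr (Or.inl ⟨by norm_num, hα⟩)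
  classical
  -- choose the scale m
  have hex : ∃ n, svcLen r n ≤ L/2 := by
    obtain ⟨n, hn⟩ := exists_pow_lt_of_lt_one (show (0:ℝ) < L/2 by linarith)
      (show (2:ℝ)⁻¹ < 1 by norm_num)
    exact ⟨n, le_of_lt (lt_of_le_of_lt (hok.len_le_two_inv_pow n) hn)⟩
  have hj1 : 1 ≤ Nat.find hex := by
    rcases Nat.eq_zero_or_pos (Nat.find hex) with h0 | h1
    · exfalso
      have h2 := Nat.find_spec hex
      rw [h0] at h2
      have h3 : (1:ℝ) ≤ L/2 := by simpa [svcLen] using h2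
      linarith
    · exact h1
  obtain ⟨m, hm⟩ : ∃ m, Nat.find hex = m + 1 := ⟨Nat.find hex - 1, by omega⟩
  have hm1 : svcLen r (m+1) ≤ L/2 := hm ▸ Nat.find_spec hex
  have hm2 : L/2 < svcLen r m := by
    by_contra hcon
    push_neg at hcon
    exact Nat.find_min hex (show m < Nat.find hex by omega) hcon
  -- bound on r m
  have h2mpos : (0:ℝ) < (2:ℝ)^m := pow_pos (by norm_num) m
  have h2m : (2:ℝ)^m < 2 / L := by
    have h1 : svcLen r m ≤ ((2:ℝ)^m)⁻¹ := by
      rw [← inv_pow]; exact hok.len_le_two_inv_pow m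
    have h3 : L/2 < ((2:ℝ)^m)⁻¹ := lt_of_lt_of_le hm2 h1
    have h4 : (2:ℝ)^m * (L/2) < 1 := by
      have := mul_lt_mul_of_pos_left h3 h2mpos
      rwa [mul_inv_cancel₀ (ne_of_gt h2mpos)] at this
    rw [lt_div_iff₀ hL]
    nlinarith
  have hAm : ((2:ℝ)^α)^m ≤ (2:ℝ)^α * L^(-α) := by
    have e1 : ((2:ℝ)^α)^m = ((2:ℝ)^m : ℝ)^α := by
      rw [← Real.rpow_natCast ((2:ℝ)^α) m, ← Real.rpow_mul (by norm_num : (0:ℝ) ≤ 2),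
        mul_comm, Real.rpow_mul (by norm_num : (0:ℝ) ≤ 2), Real.rpow_natCast]
    have e2 : (2:ℝ)^α * L^(-α) = ((2/L : ℝ))^α := by
      rw [Real.div_rpow (by norm_num) hL.le, Real.rpow_neg hL.le, div_eq_mul_inv]
    rw [e1, e2]
    exact Real.rpow_le_rpow (le_of_lt h2mpos) h2m.le hα.le
  have hrm : c * Real.exp (-(C * (2:ℝ)^α) * L^(-α)) ≤ r m := by
    rw [hrA hr m]
    apply mul_le_mul_of_nonneg_left _ hc0.le
    apply Real.exp_le_exp.mpr
    nlinarith
  have hexp1 : Real.exp (-(C * (2:ℝ)^α) * L^(-α)) ≤ 1 := by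
    apply Real.exp_le_one_iff.mpr
    have hLα : (0:ℝ) ≤ L^(-α) := Real.rpow_nonneg hL.le _
    have := mul_nonneg (mul_nonneg hC.le (by linarith : (0:ℝ) ≤ (2:ℝ)^α)) hLα
    nlinarith
  have hexp0 : (0:ℝ) < Real.exp (-(C * (2:ℝ)^α) * L^(-α)) := Real.exp_pos _
  by_cases hAB : ∃ k1 k2 : ℕ, k1 < k2 ∧ k2 < 2^(m+1) ∧
      (Set.Icc (svcLeft r (m+1) k1) (svcLeft r (m+1) k1 + svcLen r (m+1)) ∩
        Set.Ioo (x - L) (x + L)).Nonempty ∧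
      (Set.Icc (svcLeft r (m+1) k2) (svcLeft r (m+1) k2 + svcLen r (m+1)) ∩
        Set.Ioo (x - L) (x + L)).Nonempty
  · obtain ⟨k1, k2, h12, hk2, ⟨p, hp⟩, ⟨q, hq⟩⟩ := hAB
    have hsep := hok.sep' m k1 k2 h12 hk2
    have hGB : Set.Ioo (svcLeft r (m+1) k1 + svcLen r (m+1))
        (svcLeft r (m+1) k1 + svcLen r (m+1) + r m * svcLen r m) ⊆ Set.Ioo (x-L) (x+L) := by
      intro y hy
      constructor
      · have hp1 : x - L < p := hp.2.1
        have hp2 : p ≤ svcLeft r (m+1) k1 + svcLen r (m+1) := hp.1.2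
        linarith [hy.1]
      · have hq1 : q < x + L := hq.2.2
        have hq2 : svcLeft r (m+1) k2 ≤ q := hq.1.1
        linarith [hy.2]
    have hGK : Set.Ioo (svcLeft r (m+1) k1 + svcLen r (m+1))
        (svcLeft r (m+1) k1 + svcLen r (m+1) + r m * svcLen r m) ⊆ (svcSet r)ᶜ := by
      intro y hy hyK
      have hyS : y ∈ svcStage r (m+1) := Set.iInter_subset _ (m+1) hyK
      simp only [svcStage, Set.mem_iUnion, Finset.mem_range] at hyS
      obtain ⟨k, hk, hyk⟩ := hyS
      rcases le_or_gt k k1 with hle | hgt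
      · have hmono := hok.left_mono (m+1) k k1 hle (by omega)
        have := hyk.2
        have := hy.1
        linarith
      · have hk11 : k1 + 1 < 2^(m+1) := by omega
        have h1 := hok.sep m k1 hk11
        have h2 := hok.left_mono (m+1) (k1+1) k hgt hk
        have := hyk.1
        have := hy.2
        linarith
    calc ENNReal.ofReal ((c/4) * Real.exp (-(C * (2:ℝ)^α) * L ^ (-α)) * (2*L))
        ≤ ENNReal.ofReal (r m * svcLen r m) := by
          apply ENNReal.ofReal_le_ofReal
          have hmm : (c * Real.exp (-(C * (2:ℝ)^α) * L^(-α))) * (L/2) ≤ r m * svcLen r m := by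
            apply mul_le_mul hrm hm2.le (by linarith) (le_trans (by positivity) hrm)
          calc (c/4) * Real.exp (-(C * (2:ℝ)^α) * L ^ (-α)) * (2*L)
              = (c * Real.exp (-(C * (2:ℝ)^α) * L^(-α))) * (L/2) := by ring
            _ ≤ r m * svcLen r m := hmm
      _ = volume (Set.Ioo (svcLeft r (m+1) k1 + svcLen r (m+1))
            (svcLeft r (m+1) k1 + svcLen r (m+1) + r m * svcLen r m)) := by
          rw [Real.volume_Ioo]
          congr 1
          ring
      _ ≤ volume ((svcSet r)ᶜ ∩ Set.Ioo (x - L) (x + L)) :=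
          measure_mono (Set.subset_inter hGK hGB)
  · push_neg at hAB
    have huniq : ∀ k1 k2 : ℕ, k1 < 2^(m+1) → k2 < 2^(m+1) →
        (Set.Icc (svcLeft r (m+1) k1) (svcLeft r (m+1) k1 + svcLen r (m+1)) ∩
          Set.Ioo (x - L) (x + L)).Nonempty →
        (Set.Icc (svcLeft r (m+1) k2) (svcLeft r (m+1) k2 + svcLen r (m+1)) ∩
          Set.Ioo (x - L) (x + L)).Nonempty → k1 = k2 := by
      intro k1 k2 hk1 hk2 hn1 hn2
      rcases lt_trichotomy k1 k2 with hlt | heq | hgt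
      · exact absurd hn2 (Set.not_nonempty_iff_eq_empty.mpr (hAB k1 k2 hlt hk2 hn1))
      · exact heq
      · exact absurd hn1 (Set.not_nonempty_iff_eq_empty.mpr (hAB k2 k1 hgt hk1 hn2))
    have hvol : volume (svcStage r (m+1) ∩ Set.Ioo (x-L) (x+L))
        ≤ ENNReal.ofReal (svcLen r (m+1)) := by
      by_cases hne : (svcStage r (m+1) ∩ Set.Ioo (x-L) (x+L)).Nonempty
      · obtain ⟨y, hy⟩ := hne
        have hyS := hy.1
        simp only [svcStage, Set.mem_iUnion, Finset.mem_range] at hyS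
        obtain ⟨k₀, hk₀, hyk₀⟩ := hyS
        have hsub : svcStage r (m+1) ∩ Set.Ioo (x-L) (x+L) ⊆
            Set.Icc (svcLeft r (m+1) k₀) (svcLeft r (m+1) k₀ + svcLen r (m+1)) := by
          intro z hz
          have hzS := hz.1
          simp only [svcStage, Set.mem_iUnion, Finset.mem_range] at hzS
          obtain ⟨k, hk, hzk⟩ := hzS
          have hkk : k = k₀ := huniq k k₀ hk hk₀ ⟨z, hzk, hz.2⟩ ⟨y, hyk₀, hy.2⟩
          rw [← hkk]
          exact hzk
        calc volume (svcStage r (m+1) ∩ Set.Ioo (x-L) (x+L))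
            ≤ volume (Set.Icc (svcLeft r (m+1) k₀) (svcLeft r (m+1) k₀ + svcLen r (m+1))) :=
              measure_mono hsub
          _ = ENNReal.ofReal (svcLen r (m+1)) := by
              rw [Real.volume_Icc]; congr 1; ring
      · rw [Set.not_nonempty_iff_eq_empty.mp hne, measure_empty]
        exact zero_le
    have hKB : volume (svcSet r ∩ Set.Ioo (x-L) (x+L)) ≤ ENNReal.ofReal (svcLen r (m+1)) := by
      refine le_trans (measure_mono ?_) hvol
      exact Set.inter_subset_inter_left _ (Set.iInter_subset _ (m+1))
    have hdiff : (svcSet r)ᶜ ∩ Set.Ioo (x-L) (x+L)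
        = Set.Ioo (x-L) (x+L) \ (svcSet r ∩ Set.Ioo (x-L) (x+L)) := by
      ext z
      simp only [Set.mem_inter_iff, Set.mem_compl_iff, Set.mem_diff]
      tauto
    rw [hdiff, measure_diff Set.inter_subset_right
        ((SvcOK.set_measurable.inter measurableSet_Ioo).nullMeasurableSet)
        (lt_of_le_of_lt hKB ENNReal.ofReal_lt_top).ne]
    rw [Real.volume_Ioo, show x + L - (x - L) = 2*L by ring]
    have hstep : ENNReal.ofReal (2*L) - ENNReal.ofReal (svcLen r (m+1))
        ≤ ENNReal.ofReal (2*L) - volume (svcSet r ∩ Set.Ioo (x-L) (x+L)) :=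
      tsub_le_tsub_left hKB _
    refine le_trans ?_ hstep
    rw [← ENNReal.ofReal_sub _ (hok.len_pos (m+1)).le]
    apply ENNReal.ofReal_le_ofReal
    have hce : c * Real.exp (-(C * (2:ℝ)^α) * L ^ (-α)) ≤ 1 := by nlinarith
    have h1 : (c/4) * Real.exp (-(C * (2:ℝ)^α) * L ^ (-α)) * (2*L) ≤ L/2 := by
      nlinarith [mul_nonneg (by linarith : (0:ℝ) ≤ 1 - c * Real.exp (-(C * (2:ℝ)^α) * L ^ (-α))) hL.le]
    linarith

end Key

section Key2
variable {α c C : ℝ} {r : ℕ → ℝ}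

set_option maxHeartbeats 1000000 in
lemma key2 (hα : 0 < α) (hc0 : 0 < c) (hc1 : c < 1) (hC : 0 < C)
    (hr : ∀ n, r n = c * Real.exp (-C * (2 : ℝ) ^ ((n : ℝ) * α))) :
    ∃ CU > (0:ℝ), ∃ cU > (0:ℝ), ∀ L : ℝ, 0 < L → L < 1/2 → ∃ x : ℝ,
      volume ((svcSet r)ᶜ ∩ Set.Ioo (x - L) (x + L))
        ≤ ENNReal.ofReal (CU * Real.exp (-cU * L ^ (-α)) * (2*L)) := by
  classical
  have hok := svcok hα hc0 hc1 hC hr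
  have hsum := summable_r hα hc0 hC hr
  have hA1 : (1:ℝ) < (2:ℝ)^α :=
    Real.one_lt_rpow_iff_of_pos (by norm_num) |>.mpr (Or.inl ⟨by norm_num, hα⟩)
  set A := (2:ℝ)^α with hA
  set P := Real.exp (-(∑' i, r i)/(1-c)) with hPdef
  have hP0 : 0 < P := Real.exp_pos _
  set q := Real.exp (-C * (A - 1)) with hqdef
  have hq0 : 0 < q := Real.exp_pos _
  have hq1 : q < 1 := Real.exp_lt_one_iff.mpr (by nlinarith)
  set k := ⌈α⁻¹⌉₊ with hkdef
  set M₀ := (k.factorial : ℝ) / (C/2)^k with hM₀def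
  have hM₀0 : 0 < M₀ := by
    apply div_pos
    · exact_mod_cast k.factorial_pos
    · positivity
  have h1q : (0:ℝ) < 1 - q := by linarith
  refine ⟨(c * (1-q)⁻¹) * (2 * M₀ / P),
    mul_pos (mul_pos hc0 (inv_pos.mpr h1q)) (by positivity), (C/2) * (P/4)^α, ?_, ?_⟩
  · have : (0:ℝ) < (P/4)^α := Real.rpow_pos_of_pos (by positivity) α
    positivity
  intro L hL hL12
  -- find the scale m
  have hex : ∃ n, svcLen r n < 2*L := by
    obtain ⟨n, hn⟩ := exists_pow_lt_of_lt_one (show (0:ℝ) < 2*L by linarith)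
      (show (2:ℝ)⁻¹ < 1 by norm_num)
    exact ⟨n, lt_of_le_of_lt (hok.len_le_two_inv_pow n) hn⟩
  have hj1 : 1 ≤ Nat.find hex := by
    rcases Nat.eq_zero_or_pos (Nat.find hex) with h0 | h1
    · exfalso
      have h2 := Nat.find_spec hex
      rw [h0] at h2
      have h3 : (1:ℝ) < 2*L := by simpa [svcLen] using h2
      linarith
    · exact h1
  obtain ⟨m, hm⟩ : ∃ m, Nat.find hex = m + 1 := ⟨Nat.find hex - 1, by omega⟩
  have hm1 : svcLen r (m+1) < 2*L := hm ▸ Nat.find_spec hex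
  have hm2 : 2*L ≤ svcLen r m := by
    by_contra hcon
    push_neg at hcon
    exact Nat.find_min hex (show m < Nat.find hex by omega) hcon
  refine ⟨svcLen r m / 2, ?_⟩
  -- B ⊆ stage m
  have hBsub : Set.Ioo (svcLen r m / 2 - L) (svcLen r m / 2 + L) ⊆ svcStage r m := by
    intro z hz
    have hz1 : 0 ≤ z := by
      have := hz.1
      linarith
    have hz2 : z ≤ svcLen r m := by
      have := hz.2
      linarith
    have h0r : (0:ℕ) ∈ Finset.range (2^m) := Finset.mem_range.mpr (Nat.two_pow_pos m)
    apply Set.mem_biUnion h0r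
    rw [SvcOK.left_zero (r := r) m]
    exact ⟨by simpa using hz1, by simpa using hz2⟩
  have hsub2 : (svcSet r)ᶜ ∩ Set.Ioo (svcLen r m / 2 - L) (svcLen r m / 2 + L)
      ⊆ svcStage r m \ svcSet r := by
    intro z hz
    exact ⟨hBsub hz.2, hz.1⟩
  -- the measure bound
  have hvol1 : volume ((svcSet r)ᶜ ∩ Set.Ioo (svcLen r m / 2 - L) (svcLen r m / 2 + L))
      ≤ ENNReal.ofReal (∑' i, r (m+i)) :=
    le_trans (measure_mono hsub2) (hok.vol_stage_diff hsum m)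
  refine le_trans hvol1 (ENNReal.ofReal_le_ofReal ?_)
  refine le_trans (tail_bound hα hc0 hC hr m) ?_
  -- real arithmetic
  have hPn : ∀ n, P ≤ (2:ℝ)^n * svcLen r n := fun n => len_lower hα hc0 hc1 hC hr n
  have h2m1pos : (0:ℝ) < (2:ℝ)^(m+1) := pow_pos (by norm_num) (m+1)
  have h2mpos : (0:ℝ) < (2:ℝ)^m := pow_pos (by norm_num) m
  have hPL : P / (2:ℝ)^(m+1) ≤ 2*L := by
    have h1 : P ≤ (2:ℝ)^(m+1) * svcLen r (m+1) := hPn (m+1)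
    have h2 : (2:ℝ)^(m+1) * svcLen r (m+1) ≤ (2:ℝ)^(m+1) * (2*L) := by
      apply mul_le_mul_of_nonneg_left hm1.le h2m1pos.le
    rw [div_le_iff₀ h2m1pos]
    nlinarith
  set t := A^m with htdef
  have ht1 : (1:ℝ) ≤ t := one_le_pow₀ hA1.le
  have htm : t = ((2:ℝ)^m : ℝ)^α := by
    rw [htdef, hA, ← Real.rpow_natCast ((2:ℝ)^α) m, ← Real.rpow_mul (by norm_num : (0:ℝ) ≤ 2),
      mul_comm, Real.rpow_mul (by norm_num : (0:ℝ) ≤ 2), Real.rpow_natCast]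
  -- 2^m > P/(4L)
  have h2mP : P / (4*L) ≤ (2:ℝ)^m := by
    rw [div_le_iff₀ (by linarith)]
    have : P / (2:ℝ)^(m+1) ≤ 2*L := hPL
    rw [div_le_iff₀ h2m1pos] at this
    have e : (2:ℝ)^(m+1) = 2 * (2:ℝ)^m := by ring
    nlinarith
  -- (a) (C/2)*t ≥ cU * L^(-α)
  have hta : (C/2) * ((P/4)^α * L^(-α)) ≤ (C/2) * t := by
    apply mul_le_mul_of_nonneg_left _ (by linarith)
    have e1 : (P/4:ℝ)^α * L^(-α) = ((P/(4*L)):ℝ)^α := by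
      rw [Real.rpow_neg hL.le]
      rw [show P/(4*L) = (P/4)/L by ring]
      rw [Real.div_rpow (by positivity) hL.le]
      ring
    rw [e1, htm]
    exact Real.rpow_le_rpow (by positivity) h2mP hα.le
  have hE2 : Real.exp (-(C/2) * t) ≤ Real.exp (-((C/2) * (P/4)^α) * L^(-α)) := by
    apply Real.exp_le_exp.mpr
    nlinarith
  -- (b) 2^m * E1 ≤ M₀
  have hb : (2:ℝ)^m * Real.exp (-(C/2) * t) ≤ M₀ := by
    have h2mt : (2:ℝ)^m ≤ t^k := by
      have e2 : ((2:ℝ)^m : ℝ) = t ^ (α⁻¹) := by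
        rw [htm, Real.rpow_rpow_inv (by positivity) (ne_of_gt hα)]
      rw [e2, ← Real.rpow_natCast t k]
      exact Real.rpow_le_rpow_of_exponent_le ht1 (Nat.le_ceil _)
    have hexp : ((C/2) * t)^k / (k.factorial : ℝ) ≤ Real.exp ((C/2) * t) :=
      Real.pow_div_factorial_le_exp _ (by nlinarith) k
    have htk : t^k ≤ M₀ * Real.exp ((C/2) * t) := by
      rw [hM₀def]
      have e3 : ((C/2) * t)^k = (C/2)^k * t^k := mul_pow _ _ _
      rw [e3] at hexp
      have hck : (0:ℝ) < (C/2)^k := by positivity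
      rw [div_mul_eq_mul_div, le_div_iff₀ hck]
      calc t^k * (C/2)^k = (C/2)^k * t^k := by ring
        _ ≤ (k.factorial : ℝ) * Real.exp ((C/2)*t) := by
            rw [div_le_iff₀ (by exact_mod_cast k.factorial_pos : (0:ℝ) < (k.factorial:ℝ))] at hexp
            linarith
    have hepos : (0:ℝ) < Real.exp ((C/2) * t) := Real.exp_pos _
    have := mul_le_mul_of_nonneg_right (le_trans h2mt htk) (Real.exp_pos (-(C/2)*t)).le
    rw [mul_assoc, ← Real.exp_add] at this
    simpa using this
  -- assemble
  have hE1nn : (0:ℝ) ≤ Real.exp (-(C/2) * t) := (Real.exp_pos _).le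
  have hE2nn : (0:ℝ) ≤ Real.exp (-((C/2) * (P/4)^α) * L^(-α)) := (Real.exp_pos _).le
  have hK0 : (0:ℝ) ≤ c * (1-q)⁻¹ := le_of_lt (mul_pos hc0 (inv_pos.mpr h1q))
  have hE1M : Real.exp (-(C/2) * t) ≤ M₀ / (2:ℝ)^m := by
    rw [le_div_iff₀ h2mpos, mul_comm]
    exact hb
  have hfact : Real.exp (-C * t) = Real.exp (-(C/2)*t) * Real.exp (-(C/2)*t) := by
    rw [← Real.exp_add]
    congr 1
    ring
  calc (c * (1-q)⁻¹) * Real.exp (-C * t)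
      = (c * (1-q)⁻¹) * (Real.exp (-(C/2)*t) * Real.exp (-(C/2)*t)) := by rw [hfact]
    _ ≤ (c * (1-q)⁻¹) * (Real.exp (-(C/2)*t) *
          Real.exp (-((C/2) * (P/4)^α) * L^(-α))) := by
        apply mul_le_mul_of_nonneg_left _ hK0
        exact mul_le_mul_of_nonneg_left hE2 hE1nn
    _ ≤ (c * (1-q)⁻¹) * ((M₀ / (2:ℝ)^m) *
          Real.exp (-((C/2) * (P/4)^α) * L^(-α))) := by
        apply mul_le_mul_of_nonneg_left _ hK0
        exact mul_le_mul_of_nonneg_right hE1M hE2nn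
    _ ≤ (c * (1-q)⁻¹) * ((2 * M₀ / P) * (2*L) *
          Real.exp (-((C/2) * (P/4)^α) * L^(-α))) := by
        apply mul_le_mul_of_nonneg_left _ hK0
        apply mul_le_mul_of_nonneg_right _ hE2nn
        have he : M₀ / (2:ℝ)^m = (2*M₀/P) * (P / (2:ℝ)^(m+1)) := by
          field_simp
          ring
        rw [he]
        exact mul_le_mul_of_nonneg_left hPL (by positivity)
    _ = (c * (1-q)⁻¹) * (2 * M₀ / P) *
          Real.exp (-((C/2) * (P/4)^α) * L^(-α)) * (2*L) := by ring

end Key2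


set_option maxHeartbeats 1000000 in
/-- For `r n = c · exp(-C · 2^{n α})`, the complement `ω = ℝ \ K` of the associated
Smith–Volterra–Cantor set satisfies the two-sided bound
`c' exp(-C' L^{-α}) ≤ inf_x Leb(ω ∩ B(x,L))/Leb(B(x,L)) ≤ C' exp(-c' L^{-α})`
for all small `L`; in particular `ω` is `α`-exponentially thick, but not
`α'`-exponentially thick for any `0 < α' < α`. -/
theorem svc_complement_exp_thick (α c C : ℝ) (hα : 0 < α) (hc : c ∈ Set.Ioo (0 : ℝ) 1)
    (hC : 0 < C) (r : ℕ → ℝ)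
    (hr : ∀ n, r n = c * Real.exp (-C * (2 : ℝ) ^ ((n : ℝ) * α))) :
    (∃ c' > (0 : ℝ), ∃ C' > (0 : ℝ), ∃ L₀ > (0 : ℝ), ∀ L : ℝ, 0 < L → L < L₀ →
      ENNReal.ofReal (c' * Real.exp (-C' * L ^ (-α)))
          ≤ (⨅ x : ℝ, volume ((svcSet r)ᶜ ∩ Set.Ioo (x - L) (x + L)) /
              volume (Set.Ioo (x - L) (x + L))) ∧
        (⨅ x : ℝ, volume ((svcSet r)ᶜ ∩ Set.Ioo (x - L) (x + L)) /
              volume (Set.Ioo (x - L) (x + L)))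
          ≤ ENNReal.ofReal (C' * Real.exp (-c' * L ^ (-α)))) ∧
    ExpThick1 α (svcSet r)ᶜ ∧
    ∀ α' : ℝ, 0 < α' → α' < α → ¬ ExpThick1 α' (svcSet r)ᶜ := by
  obtain ⟨hc0, hc1⟩ := hc
  have hkey1 := key1 hα hc0 hc1 hC hr
  obtain ⟨CU, hCU, cU, hcU, hkey2⟩ := key2 hα hc0 hc1 hC hr
  have hA0 : (0:ℝ) < (2:ℝ)^α := Real.rpow_pos_of_pos (by norm_num) α
  have hCL : (0:ℝ) < C * (2:ℝ)^α := mul_pos hC hA0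
  refine ⟨⟨min (c/4) cU, lt_min (by linarith) hcU, max (C * (2:ℝ)^α) CU,
    lt_of_lt_of_le hCL (le_max_left _ _), 1/2, by norm_num, ?_⟩, ?_, ?_⟩
  · -- Part 1
    intro L hL hL12
    have hL1 : L < 1 := by linarith
    have hLα : (0:ℝ) ≤ L^(-α) := Real.rpow_nonneg hL.le _
    have h2L0 : (0:ℝ) < 2*L := by linarith
    constructor
    · -- lower bound
      apply le_iInf
      intro x
      rw [Real.volume_Ioo, show x + L - (x - L) = 2*L by ring]
      rw [ENNReal.le_div_iff_mul_le (Or.inl (by simp [h2L0, hL] : ENNReal.ofReal (2*L) ≠ 0))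
        (Or.inl ENNReal.ofReal_ne_top)]
      rw [← ENNReal.ofReal_mul (by positivity)]
      refine le_trans (ENNReal.ofReal_le_ofReal ?_) (hkey1 L hL hL1 x)
      have he : Real.exp (-(max (C * (2:ℝ)^α) CU) * L^(-α))
          ≤ Real.exp (-(C * (2:ℝ)^α) * L^(-α)) := by
        apply Real.exp_le_exp.mpr
        have := le_max_left (C * (2:ℝ)^α) CU
        nlinarith
      have hm : min (c/4) cU ≤ c/4 := min_le_left _ _
      have he0 : (0:ℝ) < Real.exp (-(max (C * (2:ℝ)^α) CU) * L^(-α)) := Real.exp_pos _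
      have hmin0 : (0:ℝ) < min (c/4) cU := lt_min (by linarith) hcU
      apply mul_le_mul_of_nonneg_right _ h2L0.le
      apply mul_le_mul hm he he0.le (by linarith)
    · -- upper bound
      obtain ⟨x, hx⟩ := hkey2 L hL hL12
      refine le_trans (iInf_le _ x) ?_
      rw [Real.volume_Ioo, show x + L - (x - L) = 2*L by ring]
      rw [ENNReal.div_le_iff_le_mul (Or.inl (by simp [h2L0, hL] : ENNReal.ofReal (2*L) ≠ 0))
        (Or.inl ENNReal.ofReal_ne_top)]
      refine le_trans hx ?_
      rw [← ENNReal.ofReal_mul (by positivity : (0:ℝ) ≤ max (C * (2:ℝ)^α) CU *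
        Real.exp (-(min (c/4) cU) * L^(-α)))]
      apply ENNReal.ofReal_le_ofReal
      have he : Real.exp (-cU * L^(-α)) ≤ Real.exp (-(min (c/4) cU) * L^(-α)) := by
        apply Real.exp_le_exp.mpr
        have := min_le_right (c/4) cU
        nlinarith
      have hM : CU ≤ max (C * (2:ℝ)^α) CU := le_max_right _ _
      have he0 : (0:ℝ) < Real.exp (-cU * L^(-α)) := Real.exp_pos _
      have h1 : CU * Real.exp (-cU * L^(-α)) ≤ max (C * (2:ℝ)^α) CU *
          Real.exp (-(min (c/4) cU) * L^(-α)) :=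
        mul_le_mul hM he he0.le (by positivity)
      nlinarith
  · -- Part 2: ExpThick1
    refine ⟨C * (2:ℝ)^α, hCL, c/4, by linarith, 1, one_pos, ?_⟩
    intro L hL hL1 x
    rw [Real.volume_Ioo, show x + L - (x - L) = 2*L by ring,
      ← ENNReal.ofReal_mul (by positivity)]
    exact hkey1 L hL hL1 x
  · -- Part 3
    intro α' hα'0 hα'α
    rintro ⟨C'', hC'', c'', hc'', L₀'', hL₀'', H⟩
    set T := Real.log (CU / c'') + 1 with hT
    set t₁ := (2*C''/cU) ^ ((α-α')⁻¹) with ht₁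
    set t₂ := ((max T 1) / C'') ^ (α'⁻¹) with ht₂
    set t := 1 + max (max (1/L₀'') 2) (max t₁ t₂) with htdef
    have ht₁0 : 0 ≤ t₁ := Real.rpow_nonneg (by positivity) _
    have ht2 : 3 ≤ t := by
      have h1 : (2:ℝ) ≤ max (1/L₀'') 2 := le_max_right _ _
      have h2 : max (1/L₀'') 2 ≤ max (max (1/L₀'') 2) (max t₁ t₂) := le_max_left _ _
      rw [htdef]
      linarith
    have ht0 : (0:ℝ) < t := by linarith
    have ht1 : (1:ℝ) < t := by linarith
    have htt₁ : t₁ ≤ t := by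
      have h1 : t₁ ≤ max t₁ t₂ := le_max_left _ _
      have h2 : max t₁ t₂ ≤ max (max (1/L₀'') 2) (max t₁ t₂) := le_max_right _ _
      rw [htdef]; linarith
    have htt₂ : t₂ ≤ t := by
      have h1 : t₂ ≤ max t₁ t₂ := le_max_right _ _
      have h2 : max t₁ t₂ ≤ max (max (1/L₀'') 2) (max t₁ t₂) := le_max_right _ _
      rw [htdef]; linarith
    have htL : 1/L₀'' < t := by
      have h1 : 1/L₀'' ≤ max (1/L₀'') 2 := le_max_left _ _
      have h2 : max (1/L₀'') 2 ≤ max (max (1/L₀'') 2) (max t₁ t₂) := le_max_left _ _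
      rw [htdef]; linarith
    set L := t⁻¹ with hLdef
    have hL0 : 0 < L := inv_pos.mpr ht0
    have hLL₀ : L < L₀'' := by
      rw [hLdef]
      rw [inv_lt_iff_one_lt_mul₀ ht0]
      rw [div_lt_iff₀ hL₀''] at htL
      nlinarith
    have hL12 : L < 1/2 := by
      calc L = t⁻¹ := hLdef
        _ ≤ 3⁻¹ := inv_anti₀ (by norm_num) ht2
        _ < 1/2 := by norm_num
    obtain ⟨x, hx⟩ := hkey2 L hL0 hL12
    have hH := H L hL0 hLL₀ x
    -- translate to real inequality
    have h2L0 : (0:ℝ) < 2*L := by linarith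
    rw [Real.volume_Ioo, show x + L - (x - L) = 2*L by ring,
      ← ENNReal.ofReal_mul (by positivity)] at hH
    have hcomb := le_trans hH hx
    rw [ENNReal.ofReal_le_ofReal_iff (by positivity)] at hcomb
    have hreal : c'' * Real.exp (-C'' * L^(-α')) ≤ CU * Real.exp (-cU * L^(-α)) :=
      le_of_mul_le_mul_right (by nlinarith) h2L0
    -- rpow identities
    have hLα : L^(-α) = t^α := by
      rw [hLdef, ← Real.rpow_neg_one t, ← Real.rpow_mul ht0.le]
      norm_num
    have hLα' : L^(-α') = t^α' := by
      rw [hLdef, ← Real.rpow_neg_one t, ← Real.rpow_mul ht0.le]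
      norm_num
    -- key inequality
    have htα'0 : (0:ℝ) < t^α' := Real.rpow_pos_of_pos ht0 _
    have hs1 : 2*C''/cU ≤ t^(α-α') := by
      calc 2*C''/cU = (t₁)^(α-α') := by
            rw [ht₁, Real.rpow_inv_rpow (by positivity) (by linarith : α - α' ≠ 0)]
        _ ≤ t^(α-α') := Real.rpow_le_rpow ht₁0 htt₁ (by linarith)
    have hs2 : max T 1 ≤ C'' * t^(α') := by
      have h1 : (max T 1) / C'' = t₂^(α') := by
        rw [ht₂, Real.rpow_inv_rpow (by positivity) (ne_of_gt hα'0)]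
      have h2 : t₂^(α') ≤ t^(α') :=
        Real.rpow_le_rpow (Real.rpow_nonneg (by positivity) _) htt₂ hα'0.le
      have h3 : (max T 1)/C'' ≤ t^(α') := h1 ▸ h2
      rw [div_le_iff₀ hC''] at h3
      rw [mul_comm]
      exact h3
    have hs3 : t^α = t^(α-α') * t^(α') := by
      rw [← Real.rpow_add ht0]
      congr 1
      ring
    have hkey : C'' * t^(α') + T ≤ cU * t^α := by
      have h1 : (2*C''/cU) * t^(α') ≤ t^(α-α') * t^(α') :=
        mul_le_mul_of_nonneg_right hs1 htα'0.le
      have h2 : cU * ((2*C''/cU) * t^(α')) = 2*C'' * t^(α') := by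
        field_simp
      have h3 : T ≤ max T 1 := le_max_left _ _
      rw [hs3]
      nlinarith
    -- contradiction
    have hfinal : CU * Real.exp (-cU * t^α) < c'' * Real.exp (-C'' * t^(α')) := by
      have e1 : CU * Real.exp (-cU * t^α) = Real.exp (Real.log CU + -cU * t^α) := by
        rw [Real.exp_add, Real.exp_log hCU]
      have e2 : c'' * Real.exp (-C'' * t^(α')) = Real.exp (Real.log c'' + -C'' * t^(α')) := by
        rw [Real.exp_add, Real.exp_log hc'']
      rw [e1, e2]
      apply Real.exp_lt_exp.mpr
      have hlog : T = Real.log CU - Real.log c'' + 1 := by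
        rw [hT, Real.log_div (ne_of_gt hCU) (ne_of_gt hc'')]
      nlinarith [hkey]
    rw [hLα, hLα'] at hreal
    linarith
end
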